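/- Fix γ > 0 and λ₀ > 0. Let Θ : ℝ → ℝ^{p×p} be a matrix-valued function, differentiable at λ₀ with derivative J ∈ ℝ^{p×p} (entrywise: each λ ↦ Θ(λ)_{ij} is differentiable at λ₀ with derivative J_{ij}), such that Θ(λ) is invertible for all λ in a neighborhood of λ₀, and such that for all λ in a neighborhood of λ₀ and all i, j, the fixed-point equation Θ(λ)_{ij} = ST(Θ(λ)_{ij} − γ(S_{ij} − (Θ(λ)⁻¹)_{ij}), λγ) holds. Set Ẑ = Θ(λ₀) − γ(S − Θ(λ₀)⁻¹) and assume |Ẑ_{ij}| ≠ λ₀γ for all i, j. Define M ∈ ℝ^{p×p} by M_{ij} = 1 if |Ẑ_{ij}| > λ₀γ and M_{ij} = 0 otherwise, and E ∈ ℝ^{p×p} by E_{ij} = −γ·sign(Ẑ_{ij}) if |Ẑ_{ij}| > λ₀γ and E_{ij} = 0 otherwise. Then J = M ⊙ (J − γ·Θ(λ₀)⁻¹ J Θ(λ₀)⁻¹) + E, where ⊙ denotes the entrywise (Hadamard) product. -/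

import Mathlib

open Matrix
open scoped Matrix

/-- The soft-thresholding operator `ST(z, τ) = sign(z) · max(|z| − τ, 0)`. -/
noncomputable def softThresh (z τ : ℝ) : ℝ :=
  Real.sign z * max (|z| - τ) 0

private lemma diffAt_det {p : ℕ} {lam₀ : ℝ} (A : ℝ → Matrix (Fin p) (Fin p) ℝ)
    (h : ∀ i j, DifferentiableAt ℝ (fun lam => A lam i j) lam₀) :
    DifferentiableAt ℝ (fun lam => (A lam).det) lam₀ := by
  simp only [Matrix.det_apply']
  apply DifferentiableAt.fun_sum
  intro σ _
  exact ((DifferentiableAt.fun_finset_prod (fun i _ => h (σ i) i))).const_mul _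

theorem stmt_11 {p : ℕ} (hp : 1 ≤ p) (S : Matrix (Fin p) (Fin p) ℝ) (hS : S.IsSymm)
    (γ lam₀ : ℝ) (hγ : 0 < γ) (hlam₀ : 0 < lam₀)
    (Θ : ℝ → Matrix (Fin p) (Fin p) ℝ) (J : Matrix (Fin p) (Fin p) ℝ)
    (hdiff : ∀ i j, HasDerivAt (fun lam => Θ lam i j) (J i j) lam₀)
    (hinv : ∀ᶠ lam in nhds lam₀, IsUnit (Θ lam).det)
    (hfix : ∀ᶠ lam in nhds lam₀, ∀ i j,
      Θ lam i j = softThresh (Θ lam i j - γ * (S i j - (Θ lam)⁻¹ i j)) (lam * γ))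
    (Z : Matrix (Fin p) (Fin p) ℝ) (hZ : Z = Θ lam₀ - γ • (S - (Θ lam₀)⁻¹))
    (hnd : ∀ i j, |Z i j| ≠ lam₀ * γ)
    (M E : Matrix (Fin p) (Fin p) ℝ)
    (hM : ∀ i j, M i j = if lam₀ * γ < |Z i j| then 1 else 0)
    (hE : ∀ i j, E i j = if lam₀ * γ < |Z i j| then -γ * Real.sign (Z i j) else 0) :
    J = M ⊙ (J - γ • ((Θ lam₀)⁻¹ * J * (Θ lam₀)⁻¹)) + E := by
  have hγ' : γ ≠ 0 := ne_of_gt hγ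
  set A₀ := (Θ lam₀)⁻¹ with hA₀def
  have hdiffA : ∀ i j, DifferentiableAt ℝ (fun lam => Θ lam i j) lam₀ :=
    fun i j => (hdiff i j).differentiableAt
  have hdet : DifferentiableAt ℝ (fun lam => (Θ lam).det) lam₀ := diffAt_det Θ hdiffA
  have hdet0 : IsUnit (Θ lam₀).det := hinv.self_of_nhds
  have hdetne : (Θ lam₀).det ≠ 0 := hdet0.ne_zero
  -- differentiability of the adjugate entries
  have hadj : ∀ i j, DifferentiableAt ℝ (fun lam => (Θ lam).adjugate i j) lam₀ := by
    intro i j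
    simp only [Matrix.adjugate_apply]
    apply diffAt_det
    intro k l
    simp only [Matrix.updateRow_apply]
    by_cases hk : k = j
    · simp only [hk, if_pos rfl]; exact differentiableAt_const _
    · simp only [if_neg hk]; exact hdiffA k l
  -- differentiability of the inverse entries
  have hinvdiff : ∀ i j, DifferentiableAt ℝ (fun lam => (Θ lam)⁻¹ i j) lam₀ := by
    intro i j
    have hrw : (fun lam => (Θ lam)⁻¹ i j)
        = fun lam => ((Θ lam).det)⁻¹ * (Θ lam).adjugate i j := by
      funext lam
      rw [Matrix.inv_def]
      simp [Ring.inverse_eq_inv', Matrix.smul_apply, smul_eq_mul]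
    rw [hrw]
    exact (hdet.inv hdetne).mul (hadj i j)
  set D : Matrix (Fin p) (Fin p) ℝ :=
    Matrix.of (fun i j => deriv (fun lam => (Θ lam)⁻¹ i j) lam₀) with hDdef
  have hD : ∀ i j, HasDerivAt (fun lam => (Θ lam)⁻¹ i j) (D i j) lam₀ :=
    fun i j => (hinvdiff i j).hasDerivAt
  -- derivative of the product Θ * Θ⁻¹
  have hsum : ∀ i j, HasDerivAt (fun lam => ∑ k, Θ lam i k * (Θ lam)⁻¹ k j)
      (∑ k, (J i k * A₀ k j + Θ lam₀ i k * D k j)) lam₀ := by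
    intro i j
    apply HasDerivAt.fun_sum
    intro k _
    exact (hdiff i k).mul (hD k j)
  have hconst : ∀ i j, HasDerivAt (fun lam => ∑ k, Θ lam i k * (Θ lam)⁻¹ k j) 0 lam₀ := by
    intro i j
    have heq : (fun lam => ∑ k, Θ lam i k * (Θ lam)⁻¹ k j)
        =ᶠ[nhds lam₀] fun _ => (1 : Matrix (Fin p) (Fin p) ℝ) i j := by
      filter_upwards [hinv] with lam hu
      rw [← Matrix.mul_apply, Matrix.mul_nonsing_inv _ hu]
    exact (hasDerivAt_const lam₀ _).congr_of_eventuallyEq heq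
  have hzero : ∀ i j, ∑ k, (J i k * A₀ k j + Θ lam₀ i k * D k j) = 0 :=
    fun i j => (hsum i j).unique (hconst i j)
  have hmat : J * A₀ + Θ lam₀ * D = 0 := by
    ext i j
    rw [Matrix.add_apply, Matrix.mul_apply, Matrix.mul_apply, ← Finset.sum_add_distrib,
      Matrix.zero_apply]
    exact hzero i j
  have hD2 : D = -(A₀ * J * A₀) := by
    have h1 : Θ lam₀ * D = -(J * A₀) := by
      have := hmat
      linear_combination (norm := module) this
    calc D = (A₀ * Θ lam₀) * D := by rw [Matrix.nonsing_inv_mul _ hdet0, one_mul]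
      _ = A₀ * (Θ lam₀ * D) := by rw [Matrix.mul_assoc]
      _ = A₀ * (-(J * A₀)) := by rw [h1]
      _ = -(A₀ * J * A₀) := by rw [mul_neg, Matrix.mul_assoc]
  have hZfun : ∀ i j, Z i j = Θ lam₀ i j - γ * (S i j - A₀ i j) := by
    intro i j
    rw [hZ]
    simp [Matrix.sub_apply, Matrix.smul_apply, smul_eq_mul]
  -- continuity of λ ↦ Θλ_{ij} - γ(S_{ij} - (Θλ)⁻¹_{ij})
  have hZcont : ∀ i j, ContinuousAt (fun lam => Θ lam i j - γ * (S i j - (Θ lam)⁻¹ i j)) lam₀ := by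
    intro i j
    exact ((hdiffA i j).continuousAt).sub
      ((continuousAt_const.sub (hinvdiff i j).continuousAt).const_mul γ)
  -- main entrywise argument
  ext i j
  rcases (hnd i j).lt_or_gt with hlt | hgt
  · -- |Z i j| < lam₀ * γ : the entry is locally zero
    have hMij : M i j = 0 := by rw [hM]; exact if_neg (not_lt.mpr hlt.le)
    have hEij : E i j = 0 := by rw [hE]; exact if_neg (not_lt.mpr hlt.le)
    have hcont : ContinuousAt
        (fun lam => lam * γ - |Θ lam i j - γ * (S i j - (Θ lam)⁻¹ i j)|) lam₀ :=
      ((continuousAt_id.mul continuousAt_const)).sub (hZcont i j).abs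
    have hpos : 0 < lam₀ * γ - |Θ lam₀ i j - γ * (S i j - (Θ lam₀)⁻¹ i j)| := by
      have := hZfun i j
      rw [← hA₀def, ← this]
      linarith
    have hev0 : ∀ᶠ lam in nhds lam₀,
        0 < lam * γ - |Θ lam i j - γ * (S i j - (Θ lam)⁻¹ i j)| :=
      hcont.eventually (eventually_gt_nhds hpos)
    have hev : (fun lam => Θ lam i j) =ᶠ[nhds lam₀] fun _ => (0 : ℝ) := by
      filter_upwards [hfix, hev0] with lam h1 h2
      rw [h1 i j, softThresh, max_eq_right (by linarith), mul_zero]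
    have hzeroD : HasDerivAt (fun lam => Θ lam i j) 0 lam₀ :=
      (hasDerivAt_const lam₀ (0 : ℝ)).congr_of_eventuallyEq hev
    have hJ0 : J i j = 0 := (hdiff i j).unique hzeroD
    simp [Matrix.add_apply, Matrix.hadamard_apply, hMij, hEij, hJ0]
  · -- lam₀ * γ < |Z i j| : the soft threshold is locally affine
    have hMij : M i j = 1 := by rw [hM]; exact if_pos hgt
    set s := Real.sign (Z i j) with hsdef
    have hEij : E i j = -γ * s := by rw [hE]; exact if_pos hgt
    have hZne : Z i j ≠ 0 := by
      intro h
      rw [h, abs_zero] at hgt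
      nlinarith
    have hZval : Θ lam₀ i j - γ * (S i j - (Θ lam₀)⁻¹ i j) = Z i j := by
      rw [hZfun i j, hA₀def]
    -- eventually lam*γ < |z|
    have hcont : ContinuousAt
        (fun lam => |Θ lam i j - γ * (S i j - (Θ lam)⁻¹ i j)| - lam * γ) lam₀ :=
      (hZcont i j).abs.sub (continuousAt_id.mul continuousAt_const)
    have hpos : 0 < |Θ lam₀ i j - γ * (S i j - (Θ lam₀)⁻¹ i j)| - lam₀ * γ := by
      rw [hZval]; linarith
    have hev1 : ∀ᶠ lam in nhds lam₀,
        0 < |Θ lam i j - γ * (S i j - (Θ lam)⁻¹ i j)| - lam * γ :=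
      hcont.eventually (eventually_gt_nhds hpos)
    -- eventually sign z = s
    have hev2 : ∀ᶠ lam in nhds lam₀,
        Real.sign (Θ lam i j - γ * (S i j - (Θ lam)⁻¹ i j)) = s := by
      rcases hZne.lt_or_gt with hneg | hpos'
      · have hc : ContinuousAt (fun lam => -(Θ lam i j - γ * (S i j - (Θ lam)⁻¹ i j))) lam₀ :=
          (hZcont i j).neg
        have hp0 : 0 < -(Θ lam₀ i j - γ * (S i j - (Θ lam₀)⁻¹ i j)) := by
          rw [hZval]; linarith
        filter_upwards [hc.eventually (eventually_gt_nhds hp0)] with lam h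
        rw [Real.sign_of_neg (by linarith), hsdef, Real.sign_of_neg hneg]
      · have hp0 : 0 < Θ lam₀ i j - γ * (S i j - (Θ lam₀)⁻¹ i j) := by
          rw [hZval]; exact hpos'
        filter_upwards [(hZcont i j).eventually (eventually_gt_nhds hp0)] with lam h
        rw [Real.sign_of_pos h, hsdef, Real.sign_of_pos hpos']
    -- eventually the inverse entry is affine in lam
    have hevInv : (fun lam => (Θ lam)⁻¹ i j) =ᶠ[nhds lam₀] fun lam => S i j + s * lam := by
      filter_upwards [hfix, hev1, hev2, eventually_gt_nhds hlam₀] with lam h1 h2 h3 hlampos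
      set z := Θ lam i j - γ * (S i j - (Θ lam)⁻¹ i j) with hzdef
      have hmax : max (|z| - lam * γ) 0 = |z| - lam * γ := max_eq_left (by linarith)
      have hth : Θ lam i j = s * (|z| - lam * γ) := by
        rw [h1 i j, softThresh, hmax, h3]
      have hz0 : z ≠ 0 := by
        intro h
        rw [h, abs_zero] at h2
        nlinarith
      have h4 : s * |z| = z := by
        rw [← h3]
        rcases hz0.lt_or_gt with h | h
        · rw [Real.sign_of_neg h, abs_of_neg h]; ring
        · rw [Real.sign_of_pos h, abs_of_pos h, one_mul]
      have h5 : Θ lam i j = z - s * (lam * γ) := by rw [hth, mul_sub, h4]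
      rw [hzdef] at h5
      have h6 : γ * ((S i j - (Θ lam)⁻¹ i j) + s * lam) = 0 := by linarith
      have h7 := (mul_eq_zero.mp h6).resolve_left hγ'
      linarith
    have hlin : HasDerivAt (fun lam => S i j + s * lam) s lam₀ := by
      simpa using ((hasDerivAt_id lam₀).const_mul s).const_add (S i j)
    have hDij : HasDerivAt (fun lam => (Θ lam)⁻¹ i j) s lam₀ :=
      hlin.congr_of_eventuallyEq hevInv
    have hDs : D i j = s := (hD i j).unique hDij
    have hAJA : (A₀ * J * A₀) i j = -s := by
      have := congrArg (fun X : Matrix (Fin p) (Fin p) ℝ => X i j) hD2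
      simp only [Matrix.neg_apply] at this
      rw [hDs] at this
      linarith
    simp only [Matrix.add_apply, Matrix.hadamard_apply, Matrix.sub_apply, Matrix.smul_apply,
      hMij, hEij, ← hA₀def, hAJA, smul_eq_mul]
    ring
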